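/- Let σ denote the nontrivial element of the Galois group of ℚ(√2)/ℚ applied entrywise to matrices. Then the map B_n(ℤ[√2]) → SL_n(ℝ) × SL_n(ℝ) given by M ↦ (M, σ(M)) is an injective group homomorphism with discrete image. -/

import Mathlib

set_option synthInstance.maxHeartbeats 1000000
set_option maxHeartbeats 1000000

/-- The group `B_n(R)` of upper triangular matrices in `SL_n(R)`. -/
def upperTriangularSL (n : ℕ) (R : Type*) [CommRing R] :
    Subgroup (Matrix.SpecialLinearGroup (Fin n) R) where
  carrier := {A | ((A : Matrix (Fin n) (Fin n) R)).BlockTriangular id}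
  one_mem' := by
    show ((1 : Matrix.SpecialLinearGroup (Fin n) R) : Matrix (Fin n) (Fin n) R).BlockTriangular id
    simpa using Matrix.blockTriangular_one
  mul_mem' := by
    intro A B hA hB
    show ((A * B : Matrix.SpecialLinearGroup (Fin n) R) : Matrix (Fin n) (Fin n) R).BlockTriangular id
    rw [Matrix.SpecialLinearGroup.coe_mul]
    exact Matrix.BlockTriangular.mul hA hB
  inv_mem' := by
    intro A hA
    show ((A⁻¹ : Matrix.SpecialLinearGroup (Fin n) R) : Matrix (Fin n) (Fin n) R).BlockTriangular id
    rw [Matrix.SpecialLinearGroup.coe_inv]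
    have hdet : ((A : Matrix (Fin n) (Fin n) R)).det = 1 := A.2
    have : Invertible ((A : Matrix (Fin n) (Fin n) R)) :=
      Matrix.invertibleOfIsUnitDet _ (by rw [hdet]; exact isUnit_one)
    have hinv := Matrix.blockTriangular_inv_of_blockTriangular hA
    rwa [Matrix.inv_def, hdet, Ring.inverse_one, one_smul] at hinv

noncomputable section

/-- The embedding `ℤ[√2] → ℝ`. -/
def sqrt2ToReal : ℤ√2 →+* ℝ := Zsqrtd.toReal (by norm_num)

/-- The Galois twist `a + b√2 ↦ a - b√2` followed by the embedding into `ℝ`. -/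
def sqrt2ConjToReal : ℤ√2 →+* ℝ := sqrt2ToReal.comp (starRingEnd (ℤ√2))

/-- The homomorphism `B_n(ℤ[√2]) → SL_n(ℝ) × SL_n(ℝ)`, `M ↦ (M, σ(M))`. -/
def galoisEmbedding (n : ℕ) :
    upperTriangularSL n (ℤ√2) →*
      Matrix.SpecialLinearGroup (Fin n) ℝ × Matrix.SpecialLinearGroup (Fin n) ℝ :=
  ((Matrix.SpecialLinearGroup.map sqrt2ToReal).comp
      (upperTriangularSL n (ℤ√2)).subtype).prod
    ((Matrix.SpecialLinearGroup.map sqrt2ConjToReal).comp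
      (upperTriangularSL n (ℤ√2)).subtype)

/-- the map `B_n(ℤ[√2]) → SL_n(ℝ) × SL_n(ℝ)`, `M ↦ (M, σ(M))` (with `σ`
the nontrivial Galois automorphism of `ℚ(√2)/ℚ` applied entrywise), is an injective
group homomorphism with discrete image (stated via the underlying matrices, with the
product of the real topologies). -/

lemma key (x : ℤ√2) (h1 : |sqrt2ToReal x| < 1/2) (h2 : |sqrt2ConjToReal x| < 1/2) : x = 0 := by
  have e1 : sqrt2ToReal x = (x.re : ℝ) + (x.im : ℝ) * Real.sqrt 2 := by
    simp [sqrt2ToReal, Zsqrtd.toReal_apply]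
  have e2 : sqrt2ConjToReal x = (x.re : ℝ) - (x.im : ℝ) * Real.sqrt 2 := by
    simp [sqrt2ConjToReal, sqrt2ToReal, Zsqrtd.toReal_apply, starRingEnd_apply, Zsqrtd.re_star,
      Zsqrtd.im_star, sub_eq_add_neg]
  rw [e1] at h1; rw [e2] at h2
  have hs : Real.sqrt 2 > 1 := by
    rw [show (1:ℝ) = Real.sqrt 1 by simp]
    exact Real.sqrt_lt_sqrt (by norm_num) (by norm_num)
  have hre : x.re = 0 := by
    have h3 : |(x.re : ℝ) + (x.re : ℝ)| < 1 := by
      calc |(x.re : ℝ) + (x.re : ℝ)|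
          = |((x.re : ℝ) + (x.im : ℝ) * Real.sqrt 2) + ((x.re : ℝ) - (x.im : ℝ) * Real.sqrt 2)| := by
            ring_nf
        _ ≤ |(x.re : ℝ) + (x.im : ℝ) * Real.sqrt 2| + |(x.re : ℝ) - (x.im : ℝ) * Real.sqrt 2| :=
            abs_add_le _ _
        _ < 1 := by linarith
    have h4 : |(x.re : ℝ)| < 1 := by rw [abs_lt] at h3 ⊢; constructor <;> linarith
    have h5 : |x.re| < (1:ℤ) := by exact_mod_cast (by exact_mod_cast h4 : |((x.re:ℤ):ℝ)| < 1)
    exact Int.abs_lt_one_iff.mp h5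
  have him : x.im = 0 := by
    have h3 : |(x.im : ℝ) * Real.sqrt 2 + (x.im : ℝ) * Real.sqrt 2| < 1 := by
      calc |(x.im : ℝ) * Real.sqrt 2 + (x.im : ℝ) * Real.sqrt 2|
          = |((x.re : ℝ) + (x.im : ℝ) * Real.sqrt 2) - ((x.re : ℝ) - (x.im : ℝ) * Real.sqrt 2)| := by
            ring_nf
        _ ≤ |(x.re : ℝ) + (x.im : ℝ) * Real.sqrt 2| + |(x.re : ℝ) - (x.im : ℝ) * Real.sqrt 2| :=
            abs_sub _ _
        _ < 1 := by linarith
    have h4 : |(x.im : ℝ)| < 1 := by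
      rw [show (x.im : ℝ) * Real.sqrt 2 + (x.im : ℝ) * Real.sqrt 2
            = (x.im : ℝ) * (2 * Real.sqrt 2) by ring, abs_mul] at h3
      have hpos : |2 * Real.sqrt 2| = 2 * Real.sqrt 2 := abs_of_pos (by linarith)
      rw [hpos] at h3
      nlinarith [abs_nonneg ((x.im : ℝ))]
    have h5 : |x.im| < (1:ℤ) := by exact_mod_cast (by exact_mod_cast h4 : |((x.im:ℤ):ℝ)| < 1)
    exact Int.abs_lt_one_iff.mp h5
  exact Zsqrtd.ext hre him

lemma key' (x y : ℤ√2) (h1 : |sqrt2ToReal x - sqrt2ToReal y| < 1/2)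
    (h2 : |sqrt2ConjToReal x - sqrt2ConjToReal y| < 1/2) : x = y := by
  have := key (x - y) (by rw [map_sub]; exact h1) (by rw [map_sub]; exact h2)
  exact sub_eq_zero.mp this

lemma galois_fst (n : ℕ) (A : upperTriangularSL n (ℤ√2)) (i j : Fin n) :
    (((galoisEmbedding n A).1 : Matrix (Fin n) (Fin n) ℝ)) i j
      = sqrt2ToReal (((A : Matrix.SpecialLinearGroup (Fin n) (ℤ√2)) : Matrix (Fin n) (Fin n) (ℤ√2)) i j) := rfl

lemma galois_snd (n : ℕ) (A : upperTriangularSL n (ℤ√2)) (i j : Fin n) :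
    (((galoisEmbedding n A).2 : Matrix (Fin n) (Fin n) ℝ)) i j
      = sqrt2ConjToReal (((A : Matrix.SpecialLinearGroup (Fin n) (ℤ√2)) : Matrix (Fin n) (Fin n) (ℤ√2)) i j) := rfl

theorem galoisEmbedding_injective_discrete (n : ℕ) (hn : 2 ≤ n) :
    Function.Injective (galoisEmbedding n) ∧
    DiscreteTopology
      ↥(Set.range (fun A : upperTriangularSL n (ℤ√2) =>
        ((((galoisEmbedding n) A).1 : Matrix (Fin n) (Fin n) ℝ),
         (((galoisEmbedding n) A).2 : Matrix (Fin n) (Fin n) ℝ)))) := by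
  have hinj : Function.Injective (galoisEmbedding n) := by
    intro A B h
    have hAB : ∀ i j, (((A : Matrix.SpecialLinearGroup (Fin n) (ℤ√2)) : Matrix (Fin n) (Fin n) (ℤ√2)) i j)
        = (((B : Matrix.SpecialLinearGroup (Fin n) (ℤ√2)) : Matrix (Fin n) (Fin n) (ℤ√2)) i j) := by
      intro i j
      apply key'
      · have h1 := congrArg (fun p => ((p.1 : Matrix (Fin n) (Fin n) ℝ)) i j) h
        simp only [galois_fst] at h1
        rw [h1]; simp
      · have h2 := congrArg (fun p => ((p.2 : Matrix (Fin n) (Fin n) ℝ)) i j) h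
        simp only [galois_snd] at h2
        rw [h2]; simp
    apply Subtype.ext; apply Subtype.ext
    exact Matrix.ext hAB
  refine ⟨hinj, ?_⟩
  rw [discreteTopology_iff_isOpen_singleton]
  rintro ⟨p, hp⟩
  obtain ⟨A, rfl⟩ := hp
  set f := fun A : upperTriangularSL n (ℤ√2) =>
    ((((galoisEmbedding n) A).1 : Matrix (Fin n) (Fin n) ℝ),
     (((galoisEmbedding n) A).2 : Matrix (Fin n) (Fin n) ℝ)) with hf
  set U : Set (Matrix (Fin n) (Fin n) ℝ × Matrix (Fin n) (Fin n) ℝ) := ⋂ i, ⋂ j,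
      ((fun q : Matrix (Fin n) (Fin n) ℝ × Matrix (Fin n) (Fin n) ℝ => q.1 i j)
          ⁻¹' Metric.ball ((f A).1 i j) (1/2)) ∩
      ((fun q : Matrix (Fin n) (Fin n) ℝ × Matrix (Fin n) (Fin n) ℝ => q.2 i j)
          ⁻¹' Metric.ball ((f A).2 i j) (1/2)) with hU
  have hUopen : IsOpen U := by
    apply isOpen_iInter_of_finite; intro i
    apply isOpen_iInter_of_finite; intro j
    exact (Metric.isOpen_ball.preimage (continuous_fst.matrix_elem i j)).inter
      (Metric.isOpen_ball.preimage (continuous_snd.matrix_elem i j))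
  have hpre : Subtype.val ⁻¹' U = ({⟨f A, ⟨A, rfl⟩⟩} : Set ↥(Set.range f)) := by
    ext ⟨q, hq⟩
    obtain ⟨B, rfl⟩ := hq
    simp only [Set.mem_preimage, hU, Set.mem_iInter, Set.mem_inter_iff, Metric.mem_ball,
      Set.mem_singleton_iff, Real.dist_eq]
    constructor
    · intro h
      have hBA : B = A := by
        apply Subtype.ext; apply Subtype.ext
        apply Matrix.ext
        intro i j
        apply key'
        · have := (h i j).1
          simp only [hf, galois_fst] at this
          exact this
        · have := (h i j).2
          simp only [hf, galois_snd] at this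
          exact this
      exact Subtype.ext (congrArg f hBA)
    · intro h
      have hBA : f B = f A := congrArg Subtype.val h
      intro i j
      have hBA' : ((((galoisEmbedding n) B).1 : Matrix (Fin n) (Fin n) ℝ),
          (((galoisEmbedding n) B).2 : Matrix (Fin n) (Fin n) ℝ))
          = ((((galoisEmbedding n) A).1 : Matrix (Fin n) (Fin n) ℝ),
          (((galoisEmbedding n) A).2 : Matrix (Fin n) (Fin n) ℝ)) := hBA
      have e1 : (((galoisEmbedding n) B).1 : Matrix (Fin n) (Fin n) ℝ)
          = (((galoisEmbedding n) A).1 : Matrix (Fin n) (Fin n) ℝ) := congrArg Prod.fst hBA'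
      have e2 : (((galoisEmbedding n) B).2 : Matrix (Fin n) (Fin n) ℝ)
          = (((galoisEmbedding n) A).2 : Matrix (Fin n) (Fin n) ℝ) := congrArg Prod.snd hBA'
      simp only [hf]; rw [e1, e2]
      constructor <;> · rw [sub_self]; norm_num
  exact isOpen_induced_iff.mpr ⟨U, hUopen, hpre⟩
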